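/- Let Ψ, β > 0, L ∈ ℝ^{n×k}, M ∈ ℝ^{n×n} symmetric invertible, A ∈ ℝ^{m×n}, r ∈ ℝ^m nonzero, x ∈ ℝ^n. Define K = [Ψ‖r‖₂(I_n − (1/‖r‖₂²)Aᵀrxᵀ), −βAᵀ, Ψ‖x‖₂Aᵀ(I_m − (1/‖r‖₂²)rrᵀ)] (block row matrix). Then LᵀM⁻¹KKᵀM⁻¹L = LᵀM⁻¹(Ψ²‖r‖₂²I_n + (Ψ²‖x‖₂² + β²)AᵀA − Ψ²(xrᵀA + Aᵀrxᵀ))M⁻¹L. -/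

import Mathlib

open Matrix

/-- The Euclidean norm of a vector. -/
noncomputable def enorm₂ {ι : Type*} [Fintype ι] (v : ι → ℝ) : ℝ :=
  Real.sqrt (∑ i, v i ^ 2)

lemma my_vmv_T {m n : Type*} (a : m → ℝ) (b : n → ℝ) :
    (Matrix.vecMulVec a b)ᵀ = Matrix.vecMulVec b a := by
  ext i j; simp [Matrix.vecMulVec_apply, mul_comm]

lemma my_vmv_mul {m n p : Type*} [Fintype n] (a : m → ℝ) (b c : n → ℝ) (d : p → ℝ) :
    Matrix.vecMulVec a b * Matrix.vecMulVec c d = (b ⬝ᵥ c) • Matrix.vecMulVec a d := by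
  ext i j
  simp only [Matrix.mul_apply, Matrix.vecMulVec_apply, Matrix.smul_apply, dotProduct,
    Finset.sum_mul, smul_eq_mul]
  exact Finset.sum_congr rfl fun l _ => by ring

lemma enorm_sq {ι : Type*} [Fintype ι] (v : ι → ℝ) : enorm₂ v ^ 2 = v ⬝ᵥ v := by
  rw [enorm₂, Real.sq_sqrt (Finset.sum_nonneg fun i _ => sq_nonneg _)]
  simp [dotProduct, sq]

/-- With `K = [Ψ‖r‖₂(I_n − ‖r‖₂⁻²Aᵀrxᵀ), −βAᵀ, Ψ‖x‖₂Aᵀ(I_m − ‖r‖₂⁻²rrᵀ)]`,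
one has `LᵀM⁻¹KKᵀM⁻¹L
  = LᵀM⁻¹(Ψ²‖r‖₂²I_n + (Ψ²‖x‖₂² + β²)AᵀA − Ψ²(xrᵀA + Aᵀrxᵀ))M⁻¹L`. -/
theorem ils_condition_number_factorization {m n k : ℕ}
    (Ψ β : ℝ) (hΨ : 0 < Ψ) (hβ : 0 < β)
    (L : Matrix (Fin n) (Fin k) ℝ)
    (M : Matrix (Fin n) (Fin n) ℝ) (hMsymm : Mᵀ = M) (hMinv : IsUnit M.det)
    (A : Matrix (Fin m) (Fin n) ℝ)
    (r : Fin m → ℝ) (hr : r ≠ 0) (x : Fin n → ℝ)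
    (K : Matrix (Fin n) (Fin n ⊕ (Fin m ⊕ Fin m)) ℝ)
    (hK : K = Matrix.fromCols
      ((Ψ * enorm₂ r) •
        ((1 : Matrix (Fin n) (Fin n) ℝ) -
          (enorm₂ r ^ 2)⁻¹ • (Aᵀ * Matrix.vecMulVec r x)))
      (Matrix.fromCols (-(β • Aᵀ))
        ((Ψ * enorm₂ x) •
          (Aᵀ * ((1 : Matrix (Fin m) (Fin m) ℝ) -
            (enorm₂ r ^ 2)⁻¹ • Matrix.vecMulVec r r))))) :
    Lᵀ * M⁻¹ * K * Kᵀ * M⁻¹ * L =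
      Lᵀ * M⁻¹ *
        ((Ψ ^ 2 * enorm₂ r ^ 2) • (1 : Matrix (Fin n) (Fin n) ℝ) +
          (Ψ ^ 2 * enorm₂ x ^ 2 + β ^ 2) • (Aᵀ * A) -
          Ψ ^ 2 • (Matrix.vecMulVec x r * A + Aᵀ * Matrix.vecMulVec r x)) *
        M⁻¹ * L := by
  have hmid : K * Kᵀ =
      ((Ψ ^ 2 * enorm₂ r ^ 2) • (1 : Matrix (Fin n) (Fin n) ℝ) +
        (Ψ ^ 2 * enorm₂ x ^ 2 + β ^ 2) • (Aᵀ * A) -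
        Ψ ^ 2 • (Matrix.vecMulVec x r * A + Aᵀ * Matrix.vecMulVec r x)) := by
    have hc : enorm₂ r ^ 2 ≠ 0 := by
      rw [enorm_sq]
      exact fun h => hr (by
        funext i
        have := (Finset.sum_eq_zero_iff_of_nonneg (fun j _ => mul_self_nonneg (r j))).mp h i
          (Finset.mem_univ i)
        have := mul_self_eq_zero.mp this
        simpa using this)
    have hrr : r ⬝ᵥ r = enorm₂ r ^ 2 := (enorm_sq r).symm
    have hxx : x ⬝ᵥ x = enorm₂ x ^ 2 := (enorm_sq x).symm
    subst hK
    rw [transpose_fromCols, transpose_fromCols, fromCols_mul_fromRows,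
      fromCols_mul_fromRows]
    simp only [transpose_smul, transpose_sub, transpose_one, transpose_mul, transpose_transpose,
      transpose_neg, my_vmv_T, Matrix.smul_mul, Matrix.mul_smul, sub_mul, mul_sub,
      Matrix.mul_sub, Matrix.sub_mul, mul_one, one_mul, smul_smul, Matrix.neg_mul,
      Matrix.mul_neg, neg_neg, smul_sub]
    simp only [Matrix.mul_one, Matrix.one_mul, Matrix.mul_assoc]
    rw [show Matrix.vecMulVec r x * (Matrix.vecMulVec x r * A)
        = (enorm₂ x ^ 2) • (Matrix.vecMulVec r r * A) by
      rw [← Matrix.mul_assoc, my_vmv_mul, Matrix.smul_mul, hxx]]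
    rw [show Matrix.vecMulVec r r * (Matrix.vecMulVec r r * A)
        = (enorm₂ r ^ 2) • (Matrix.vecMulVec r r * A) by
      rw [← Matrix.mul_assoc, my_vmv_mul, Matrix.smul_mul, hrr]]
    simp only [Matrix.mul_smul, smul_smul]
    have hc1 : enorm₂ r ≠ 0 := fun h => hc (by rw [h]; ring)
    match_scalars <;> field_simp <;> ring
  rw [Matrix.mul_assoc (Lᵀ * M⁻¹) K Kᵀ, hmid]
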